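/- Let q ≥ p ≥ 1 and d ∈ ℕ, and let Q be a q×p polynomial matrix over ℝ[X] each of whose entries has degree at most d. Let M be the degree-d coefficient matrix of Q, and assume det(Mᵀ·M) ≠ 0. Then the coefficient of X^{2·d·p} in det(Qᵀ·Q) equals det(Mᵀ·M); in particular det(Qᵀ·Q) is a nonzero polynomial, i.e., the polynomial matrix Qᵀ·Q is nonsingular. -/

import Mathlib

open Polynomial Matrix

lemma coeff_det_aux (p e : ℕ) (A : Matrix (Fin p) (Fin p) ℝ[X])
    (h : ∀ i j, (A i j).natDegree ≤ e) :
    A.det.coeff (p * e) = (Matrix.of fun i j => (A i j).coeff e).det := by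
  simp only [Matrix.det_apply, Finset.smul_sum]
  rw [finset_sum_coeff]
  refine Finset.sum_congr rfl fun σ _ => ?_
  rw [coeff_smul]
  congr 1
  have := coeff_prod_of_natDegree_le (s := Finset.univ) (fun i : Fin p => A (σ i) i) e
    (fun i _ => h _ _)
  simpa using this

/-- **nonsingularity of `Qᵀ·Q`, cf. Lemma 4.** If every entry of the `q × p`
polynomial matrix `Q` (with `q ≥ p ≥ 1`) has degree at most `d` and the degree-`d`
coefficient matrix `M` satisfies `det (Mᵀ·M) ≠ 0`, then the coefficient of `X^(2·d·p)` in
`det (Qᵀ·Q)` equals `det (Mᵀ·M)`; in particular `det (Qᵀ·Q)` is a nonzero polynomial,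
i.e., `Qᵀ·Q` is nonsingular. -/
theorem det_transpose_mul_self_nonsingular
    (p q : ℕ) (hp : 1 ≤ p) (hpq : p ≤ q) (d : ℕ)
    (Q : Matrix (Fin q) (Fin p) ℝ[X])
    (hdeg : ∀ i j, (Q i j).degree ≤ d)
    (M : Matrix (Fin q) (Fin p) ℝ)
    (hM : ∀ i j, M i j = (Q i j).coeff d)
    (hMdet : (Mᵀ * M).det ≠ 0) :
    (Qᵀ * Q).det.coeff (2 * d * p) = (Mᵀ * M).det ∧ (Qᵀ * Q).det ≠ 0 := by
  have hnat : ∀ i j, (Q i j).natDegree ≤ d := fun i j => natDegree_le_iff_degree_le.2 (hdeg i j)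
  have hent : ∀ i j, ((Qᵀ * Q) i j).natDegree ≤ 2 * d := by
    intro i j
    rw [Matrix.mul_apply]
    refine natDegree_sum_le_of_forall_le _ _ fun k _ => ?_
    calc (Qᵀ i k * Q k j).natDegree ≤ (Qᵀ i k).natDegree + (Q k j).natDegree :=
          natDegree_mul_le
      _ ≤ d + d := add_le_add (hnat _ _) (hnat _ _)
      _ = 2 * d := (two_mul d).symm
  have hcoe : ∀ i j, ((Qᵀ * Q) i j).coeff (2 * d) = (Mᵀ * M) i j := by
    intro i j
    rw [Matrix.mul_apply, Matrix.mul_apply, finset_sum_coeff]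
    refine Finset.sum_congr rfl fun k _ => ?_
    have : (Qᵀ i k * Q k j).coeff (d + d) = (Qᵀ i k).coeff d * (Q k j).coeff d :=
      coeff_mul_add_eq_of_natDegree_le (hnat _ _) (hnat _ _)
    rw [two_mul, this, Matrix.transpose_apply, Matrix.transpose_apply, hM, hM]
  have key : (Qᵀ * Q).det.coeff (2 * d * p) = (Mᵀ * M).det := by
    have := coeff_det_aux p (2 * d) (Qᵀ * Q) hent
    rw [mul_comm p (2 * d)] at this
    rw [this]
    congr 1
    exact Matrix.ext hcoe
  refine ⟨key, fun h => hMdet ?_⟩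
  rw [← key, h, coeff_zero]
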